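/- Let α, β ∈ ℕ³ with β_j ≥ 1 for j = 0,1,2 and ‖α+β‖_∞ ≤ |α| + 1. Then R^α_β and R^α_{β−e_j} for j = 0,1,2 are all Lebesgue integrable on T, and ∫_T R^α_β d(x,y) = (1/2) · (∫_T R^α_{β−e₀} d(x,y) + ∫_T R^α_{β−e₁} d(x,y) + ∫_T R^α_{β−e₂} d(x,y)). -/

import Mathlib

open MeasureTheory

/-- The rational function `R^α_β` on the standard triangle, in the coordinates
`λ₀ = 1-x-y`, `λ₁ = x`, `λ₂ = y` (so `1-λ₀ = x+y`, `1-λ₁ = 1-x`, `1-λ₂ = 1-y`). -/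
noncomputable def ratR (α₀ α₁ α₂ β₀ β₁ β₂ : ℕ) (q : ℝ × ℝ) : ℝ :=
  (1 - q.1 - q.2) ^ α₀ * q.1 ^ α₁ * q.2 ^ α₂ /
    ((q.1 + q.2) ^ β₀ * (1 - q.1) ^ β₁ * (1 - q.2) ^ β₂)

/-- The standard triangle `T ⊂ ℝ²`. -/
def stdTri : Set (ℝ × ℝ) := {q | 0 ≤ q.1 ∧ 0 ≤ q.2 ∧ q.1 + q.2 ≤ 1}

section Aux
open Set Real

/-- The open interior of the triangle. -/
def triInt : Set (ℝ × ℝ) := {q | 0 < q.1 ∧ 0 < q.2 ∧ q.1 + q.2 < 1}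



lemma isClosed_stdTri : IsClosed stdTri := by
  have : stdTri = {q : ℝ × ℝ | 0 ≤ q.1} ∩ ({q : ℝ × ℝ | 0 ≤ q.2} ∩ {q : ℝ × ℝ | q.1 + q.2 ≤ 1}) := rfl
  rw [this]
  exact (isClosed_le continuous_const continuous_fst).inter
    ((isClosed_le continuous_const continuous_snd).inter
      (isClosed_le (continuous_fst.add continuous_snd) continuous_const))

lemma convex_stdTri : Convex ℝ stdTri := by
  have : stdTri = {q : ℝ × ℝ | 0 ≤ q.1} ∩ ({q : ℝ × ℝ | 0 ≤ q.2} ∩ {q : ℝ × ℝ | q.1 + q.2 ≤ 1}) := rfl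
  rw [this]
  refine (convex_halfSpace_ge ⟨fun _ _ => rfl, fun _ _ => rfl⟩ 0).inter
    ((convex_halfSpace_ge ⟨fun _ _ => rfl, fun _ _ => rfl⟩ 0).inter
      (convex_halfSpace_le ⟨fun _ _ => ?_, fun _ _ => ?_⟩ 1)) <;> simp <;> ring

lemma diff_null : volume (stdTri \ triInt) = 0 := by
  have hsub : stdTri \ triInt ⊆ frontier stdTri := by
    rintro ⟨x, y⟩ ⟨⟨hx, hy, hxy⟩, hq'⟩
    refine ⟨subset_closure ⟨hx, hy, hxy⟩, fun hmem => ?_⟩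
    rw [mem_interior_iff_mem_nhds, Metric.mem_nhds_iff] at hmem
    obtain ⟨ε, hε, hball⟩ := hmem
    apply hq'
    refine ⟨?_, ?_, ?_⟩
    · by_contra h
      push_neg at h
      have hx0 : x = 0 := le_antisymm h hx
      have : ((x - ε/2, y) : ℝ × ℝ) ∈ stdTri := by
        apply hball
        have hd : dist ((x - ε/2, y) : ℝ × ℝ) (x, y) < ε := by
          rw [Prod.dist_eq]
          refine max_lt ?_ ?_ <;> rw [Real.dist_eq]
          · rw [show x - ε/2 - x = -(ε/2) by ring, abs_neg, abs_of_nonneg (by linarith)]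
            linarith
          · simp; linarith
        exact hd
      have h1 : (0:ℝ) ≤ x - ε/2 := this.1
      linarith
    · by_contra h
      push_neg at h
      have hy0 : y = 0 := le_antisymm h hy
      have : ((x, y - ε/2) : ℝ × ℝ) ∈ stdTri := by
        apply hball
        have hd : dist ((x, y - ε/2) : ℝ × ℝ) (x, y) < ε := by
          rw [Prod.dist_eq]
          refine max_lt ?_ ?_ <;> rw [Real.dist_eq]
          · simp; linarith
          · rw [show y - ε/2 - y = -(ε/2) by ring, abs_neg, abs_of_nonneg (by linarith)]
            linarith
        exact hd
      have h1 : (0:ℝ) ≤ y - ε/2 := this.2.1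
      linarith
    · by_contra h
      push_neg at h
      have hxy1 : x + y = 1 := le_antisymm hxy h
      have : ((x + ε/2, y) : ℝ × ℝ) ∈ stdTri := by
        apply hball
        have hd : dist ((x + ε/2, y) : ℝ × ℝ) (x, y) < ε := by
          rw [Prod.dist_eq]
          refine max_lt ?_ ?_ <;> rw [Real.dist_eq]
          · rw [show x + ε/2 - x = ε/2 by ring, abs_of_nonneg (by linarith)]
            linarith
          · simp; linarith
        exact hd
      have h1 : x + ε/2 + y ≤ 1 := this.2.2
      linarith
  exact measure_mono_null hsub (convex_stdTri.addHaar_frontier volume)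

lemma ae_triInt : ∀ᵐ q ∂(volume.restrict stdTri), q ∈ triInt := by
  rw [ae_restrict_iff' isClosed_stdTri.measurableSet]
  rw [MeasureTheory.ae_iff]
  convert diff_null using 2
  ext q
  simp [Set.diff_eq, Set.mem_setOf_eq]




noncomputable def domH (q : ℝ × ℝ) : ℝ :=
  9 * (q.1 ^ (-(1/2) : ℝ) * q.2 ^ (-(1/2) : ℝ) +
       (1 - q.1) ^ (-(1/2) : ℝ) * q.2 ^ (-(1/2) : ℝ) +
       q.1 ^ (-(1/2) : ℝ) * (1 - q.2) ^ (-(1/2) : ℝ))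

lemma rpow_half_inv {x : ℝ} (hx : 0 < x) : x ^ (-(1/2) : ℝ) = (Real.sqrt x)⁻¹ := by
  rw [Real.sqrt_eq_rpow, ← Real.rpow_neg hx.le]

lemma inv_bound {x y : ℝ} (hx : 0 < x) (hy : 0 < y) (hxy : x + y < 1) :
    ((x + y) * (1 - x) * (1 - y))⁻¹ ≤ domH (x, y) := by
  have h1x : 0 < 1 - x := by linarith
  have h1y : 0 < 1 - y := by linarith
  have hxy0 : 0 < x + y := by linarith
  have hsx : 0 < Real.sqrt x := Real.sqrt_pos.2 hx
  have hsy : 0 < Real.sqrt y := Real.sqrt_pos.2 hy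
  have hs1x : 0 < Real.sqrt (1 - x) := Real.sqrt_pos.2 h1x
  have hs1y : 0 < Real.sqrt (1 - y) := Real.sqrt_pos.2 h1y
  have hA : (0:ℝ) ≤ (Real.sqrt x)⁻¹ * (Real.sqrt y)⁻¹ := by positivity
  have hB : (0:ℝ) ≤ (Real.sqrt (1 - x))⁻¹ * (Real.sqrt y)⁻¹ := by positivity
  have hC : (0:ℝ) ≤ (Real.sqrt x)⁻¹ * (Real.sqrt (1 - y))⁻¹ := by positivity
  have hd : domH (x, y) =
      9 * ((Real.sqrt x)⁻¹ * (Real.sqrt y)⁻¹ + (Real.sqrt (1 - x))⁻¹ * (Real.sqrt y)⁻¹ +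
        (Real.sqrt x)⁻¹ * (Real.sqrt (1 - y))⁻¹) := by
    simp only [domH]
    rw [rpow_half_inv hx, rpow_half_inv hy, rpow_half_inv h1x, rpow_half_inv h1y]
  rw [hd]
  -- three cases according to which barycentric coordinate is ≥ 1/3
  rcases le_or_gt (1/3 : ℝ) (1 - x - y) with hc | hc₀
  · -- λ₀ ≥ 1/3 : bound by first term
    have hP : (x + y) / 9 ≤ (x + y) * (1 - x) * (1 - y) := by
      have ha : (1:ℝ)/3 ≤ 1 - x := by linarith
      have hb : (1:ℝ)/3 ≤ 1 - y := by linarith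
      calc (x + y) / 9 = (x + y) * (1/3) * (1/3) := by ring
        _ ≤ (x + y) * (1 - x) * (1 - y) := by gcongr <;> linarith
    have h2 : ((x + y) * (1 - x) * (1 - y))⁻¹ ≤ 9 * (x + y)⁻¹ := by
      rw [show (9:ℝ) * (x + y)⁻¹ = ((x + y) / 9)⁻¹ by rw [div_eq_mul_inv, mul_inv]; ring]
      exact inv_anti₀ (by positivity) hP
    have h3 : Real.sqrt x * Real.sqrt y ≤ x + y := by
      rw [← Real.sqrt_mul hx.le]
      calc Real.sqrt (x * y) ≤ Real.sqrt ((x + y) ^ 2) := Real.sqrt_le_sqrt (by nlinarith)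
        _ = x + y := Real.sqrt_sq hxy0.le
    have h4 : (x + y)⁻¹ ≤ (Real.sqrt x)⁻¹ * (Real.sqrt y)⁻¹ := by
      rw [← mul_inv]
      exact inv_anti₀ (by positivity) h3
    nlinarith
  rcases le_or_gt (1/3 : ℝ) x with hc | hc₁
  · -- λ₁ = x ≥ 1/3 : bound by second term
    have hP : (1 - x) / 9 ≤ (x + y) * (1 - x) * (1 - y) := by
      have ha : (1:ℝ)/3 ≤ x + y := by linarith
      have hb : (1:ℝ)/3 ≤ 1 - y := by linarith
      calc (1 - x) / 9 = (1/3) * (1 - x) * (1/3) := by ring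
        _ ≤ (x + y) * (1 - x) * (1 - y) := by gcongr <;> linarith
    have h2 : ((x + y) * (1 - x) * (1 - y))⁻¹ ≤ 9 * (1 - x)⁻¹ := by
      rw [show (9:ℝ) * (1 - x)⁻¹ = ((1 - x) / 9)⁻¹ by rw [div_eq_mul_inv, mul_inv]; ring]
      exact inv_anti₀ (by positivity) hP
    have h3 : Real.sqrt (1 - x) * Real.sqrt y ≤ 1 - x := by
      calc Real.sqrt (1 - x) * Real.sqrt y ≤ Real.sqrt (1 - x) * Real.sqrt (1 - x) := by
            exact mul_le_mul_of_nonneg_left (Real.sqrt_le_sqrt (by linarith)) hs1x.le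
        _ = 1 - x := Real.mul_self_sqrt h1x.le
    have h4 : (1 - x)⁻¹ ≤ (Real.sqrt (1 - x))⁻¹ * (Real.sqrt y)⁻¹ := by
      rw [← mul_inv]
      exact inv_anti₀ (by positivity) h3
    nlinarith
  · -- λ₂ = y ≥ 1/3 : bound by third term
    have hc : (1/3 : ℝ) ≤ y := by linarith
    have hP : (1 - y) / 9 ≤ (x + y) * (1 - x) * (1 - y) := by
      have ha : (1:ℝ)/3 ≤ x + y := by linarith
      have hb : (1:ℝ)/3 ≤ 1 - x := by linarith
      calc (1 - y) / 9 = (1/3) * (1/3) * (1 - y) := by ring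
        _ ≤ (x + y) * (1 - x) * (1 - y) := by gcongr <;> linarith
    have h2 : ((x + y) * (1 - x) * (1 - y))⁻¹ ≤ 9 * (1 - y)⁻¹ := by
      rw [show (9:ℝ) * (1 - y)⁻¹ = ((1 - y) / 9)⁻¹ by rw [div_eq_mul_inv, mul_inv]; ring]
      exact inv_anti₀ (by positivity) hP
    have h3 : Real.sqrt x * Real.sqrt (1 - y) ≤ 1 - y := by
      calc Real.sqrt x * Real.sqrt (1 - y) ≤ Real.sqrt (1 - y) * Real.sqrt (1 - y) := by
            exact mul_le_mul_of_nonneg_right (Real.sqrt_le_sqrt (by linarith)) hs1y.le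
        _ = 1 - y := Real.mul_self_sqrt h1y.le
    have h4 : (1 - y)⁻¹ ≤ (Real.sqrt x)⁻¹ * (Real.sqrt (1 - y))⁻¹ := by
      rw [← mul_inv]
      exact inv_anti₀ (by positivity) h3
    nlinarith

lemma ratR_le_domH (α₀ α₁ α₂ β₀ β₁ β₂ : ℕ)
    (hβ₀ : 1 ≤ β₀) (hβ₁ : 1 ≤ β₁) (hβ₂ : 1 ≤ β₂)
    (hmax : max (α₀ + β₀) (max (α₁ + β₁) (α₂ + β₂)) ≤ α₀ + α₁ + α₂ + 1)
    {q : ℝ × ℝ} (hq : q ∈ triInt) :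
    |ratR α₀ α₁ α₂ β₀ β₁ β₂ q| ≤ domH q := by
  obtain ⟨x, y⟩ := q
  obtain ⟨hx, hy, hxy⟩ := hq
  simp only at hx hy hxy
  have hz : 0 < 1 - x - y := by linarith
  have h1x : 0 < 1 - x := by linarith
  have h1y : 0 < 1 - y := by linarith
  have hxy0 : 0 < x + y := by linarith
  -- exponent inequalities
  have e0 : β₀ - 1 ≤ α₁ + α₂ := by omega
  have e1 : β₁ - 1 ≤ α₀ + α₂ := by
    have := le_trans (le_max_left _ _) (le_trans (le_max_right _ _) hmax); omega
  have e2 : β₂ - 1 ≤ α₀ + α₁ := by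
    have := le_trans (le_max_right _ _) (le_trans (le_max_right _ _) hmax); omega
  obtain ⟨b₀, rfl⟩ : ∃ b, β₀ = b + 1 := ⟨β₀ - 1, by omega⟩
  obtain ⟨b₁, rfl⟩ : ∃ b, β₁ = b + 1 := ⟨β₁ - 1, by omega⟩
  obtain ⟨b₂, rfl⟩ : ∃ b, β₂ = b + 1 := ⟨β₂ - 1, by omega⟩
  simp only [Nat.add_sub_cancel] at e0 e1 e2
  have hnum : (0:ℝ) ≤ (1 - x - y) ^ α₀ * x ^ α₁ * y ^ α₂ :=
    mul_nonneg (mul_nonneg (pow_nonneg hz.le _) (pow_nonneg hx.le _)) (pow_nonneg hy.le _)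
  have hD'' : (0:ℝ) < (x + y) ^ b₀ * (1 - x) ^ b₁ * (1 - y) ^ b₂ :=
    mul_pos (mul_pos (pow_pos hxy0 _) (pow_pos h1x _)) (pow_pos h1y _)
  have hP : (0:ℝ) < (x + y) * (1 - x) * (1 - y) :=
    mul_pos (mul_pos hxy0 h1x) h1y
  have hden : (0:ℝ) < (x + y) ^ (b₀+1) * (1 - x) ^ (b₁+1) * (1 - y) ^ (b₂+1) :=
    mul_pos (mul_pos (pow_pos hxy0 _) (pow_pos h1x _)) (pow_pos h1y _)
  have hR : ratR α₀ α₁ α₂ (b₀+1) (b₁+1) (b₂+1) (x, y) =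
      ((1 - x - y) ^ α₀ * x ^ α₁ * y ^ α₂) /
        ((x + y) ^ (b₀+1) * (1 - x) ^ (b₁+1) * (1 - y) ^ (b₂+1)) := rfl
  have habs : |ratR α₀ α₁ α₂ (b₀+1) (b₁+1) (b₂+1) (x, y)| =
      ratR α₀ α₁ α₂ (b₀+1) (b₁+1) (b₂+1) (x, y) := by
    rw [hR]; exact abs_of_nonneg (div_nonneg hnum hden.le)
  rw [habs, hR]
  -- numerator bound
  have hNle : (1 - x - y) ^ α₀ * x ^ α₁ * y ^ α₂ ≤
      (x + y) ^ b₀ * (1 - x) ^ b₁ * (1 - y) ^ b₂ := by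
    have s0 : (1 - x - y) ^ α₀ ≤ ((1 - x) * (1 - y)) ^ α₀ :=
      pow_le_pow_left₀ hz.le (by nlinarith) _
    have s1 : x ^ α₁ ≤ ((x + y) * (1 - y)) ^ α₁ :=
      pow_le_pow_left₀ hx.le (by nlinarith) _
    have s2 : y ^ α₂ ≤ ((x + y) * (1 - x)) ^ α₂ :=
      pow_le_pow_left₀ hy.le (by nlinarith) _
    calc (1 - x - y) ^ α₀ * x ^ α₁ * y ^ α₂
        ≤ ((1 - x) * (1 - y)) ^ α₀ * ((x + y) * (1 - y)) ^ α₁ * ((x + y) * (1 - x)) ^ α₂ := by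
          apply mul_le_mul _ s2 (pow_nonneg hy.le _) (by positivity)
          exact mul_le_mul s0 s1 (pow_nonneg hx.le _) (by positivity)
      _ = (x + y) ^ (α₁ + α₂) * (1 - x) ^ (α₀ + α₂) * (1 - y) ^ (α₀ + α₁) := by
          simp only [mul_pow, pow_add]; ring
      _ ≤ (x + y) ^ b₀ * (1 - x) ^ b₁ * (1 - y) ^ b₂ := by
          have t0 : (x + y) ^ (α₁ + α₂) ≤ (x + y) ^ b₀ :=
            pow_le_pow_of_le_one hxy0.le (by linarith) e0
          have t1 : (1 - x) ^ (α₀ + α₂) ≤ (1 - x) ^ b₁ :=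
            pow_le_pow_of_le_one h1x.le (by linarith) e1
          have t2 : (1 - y) ^ (α₀ + α₁) ≤ (1 - y) ^ b₂ :=
            pow_le_pow_of_le_one h1y.le (by linarith) e2
          apply mul_le_mul _ t2 (pow_nonneg h1y.le _) (by positivity)
          exact mul_le_mul t0 t1 (pow_nonneg h1x.le _) (by positivity)
  calc ((1 - x - y) ^ α₀ * x ^ α₁ * y ^ α₂) /
        ((x + y) ^ (b₀+1) * (1 - x) ^ (b₁+1) * (1 - y) ^ (b₂+1))
      ≤ ((x + y) ^ b₀ * (1 - x) ^ b₁ * (1 - y) ^ b₂) /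
        ((x + y) ^ (b₀+1) * (1 - x) ^ (b₁+1) * (1 - y) ^ (b₂+1)) := by
        exact div_le_div_of_nonneg_right hNle hden.le
    _ = ((x + y) * (1 - x) * (1 - y))⁻¹ := by
        rw [show (x + y) ^ (b₀+1) * (1 - x) ^ (b₁+1) * (1 - y) ^ (b₂+1) =
          ((x + y) ^ b₀ * (1 - x) ^ b₁ * (1 - y) ^ b₂) * ((x + y) * (1 - x) * (1 - y)) by ring]
        rw [div_mul_eq_div_div, div_self hD''.ne', one_div]
    _ ≤ domH (x, y) := inv_bound hx hy hxy




lemma int1D : IntegrableOn (fun x : ℝ => x ^ (-(1/2) : ℝ)) (Icc 0 1) := by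
  rw [← intervalIntegrable_iff_integrableOn_Icc_of_le (by norm_num : (0:ℝ) ≤ 1)]
  exact intervalIntegral.intervalIntegrable_rpow' (by norm_num)

lemma int1D' : IntegrableOn (fun x : ℝ => (1 - x) ^ (-(1/2) : ℝ)) (Icc 0 1) := by
  rw [← intervalIntegrable_iff_integrableOn_Icc_of_le (by norm_num : (0:ℝ) ≤ 1)]
  have := (intervalIntegral.intervalIntegrable_rpow' (a := 0) (b := 1)
    (r := (-(1/2) : ℝ)) (by norm_num)).comp_sub_left 1
  norm_num at this
  exact this.symm

lemma prod_int {f g : ℝ → ℝ} (hf : IntegrableOn f (Icc 0 1)) (hg : IntegrableOn g (Icc 0 1)) :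
    IntegrableOn (fun q : ℝ × ℝ => f q.1 * g q.2) (Icc (0:ℝ) 1 ×ˢ Icc (0:ℝ) 1) := by
  have h := hf.mul_prod hg
  rwa [IntegrableOn, Measure.volume_eq_prod, ← Measure.prod_restrict]

lemma integrableOn_domH : IntegrableOn domH stdTri := by
  have hsub : stdTri ⊆ Icc (0:ℝ) 1 ×ˢ Icc (0:ℝ) 1 := by
    rintro ⟨x, y⟩ ⟨hx, hy, hxy⟩
    simp only at hx hy hxy
    exact ⟨⟨hx, by linarith⟩, ⟨hy, by linarith⟩⟩
  apply IntegrableOn.mono_set _ hsub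
  have h1 := prod_int int1D int1D
  have h2 := prod_int int1D' int1D
  have h3 := prod_int int1D int1D'
  have := ((h1.add h2).add h3).const_mul (9:ℝ)
  exact this


lemma measurable_ratR (α₀ α₁ α₂ β₀ β₁ β₂ : ℕ) : Measurable (ratR α₀ α₁ α₂ β₀ β₁ β₂) := by
  apply Measurable.div <;> fun_prop

lemma red0 (α₀ α₁ α₂ β₀ β₁ β₂ : ℕ) (hβ₀ : 1 ≤ β₀) {q : ℝ × ℝ} (hq : q ∈ triInt) :
    ratR α₀ α₁ α₂ (β₀ - 1) β₁ β₂ q = (q.1 + q.2) * ratR α₀ α₁ α₂ β₀ β₁ β₂ q := by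
  obtain ⟨b, rfl⟩ : ∃ b, β₀ = b + 1 := ⟨β₀ - 1, by omega⟩
  obtain ⟨x, y⟩ := q
  obtain ⟨hx, hy, hxy⟩ := hq
  simp only at hx hy hxy
  have h1 : x + y ≠ 0 := by intro h; linarith
  have h2 : (1 - x : ℝ) ≠ 0 := by intro h; linarith
  have h3 : (1 - y : ℝ) ≠ 0 := by intro h; linarith
  simp only [ratR, Nat.add_sub_cancel]
  field_simp
  ring

lemma red1 (α₀ α₁ α₂ β₀ β₁ β₂ : ℕ) (hβ₁ : 1 ≤ β₁) {q : ℝ × ℝ} (hq : q ∈ triInt) :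
    ratR α₀ α₁ α₂ β₀ (β₁ - 1) β₂ q = (1 - q.1) * ratR α₀ α₁ α₂ β₀ β₁ β₂ q := by
  obtain ⟨b, rfl⟩ : ∃ b, β₁ = b + 1 := ⟨β₁ - 1, by omega⟩
  obtain ⟨x, y⟩ := q
  obtain ⟨hx, hy, hxy⟩ := hq
  simp only at hx hy hxy
  have h1 : x + y ≠ 0 := by intro h; linarith
  have h2 : (1 - x : ℝ) ≠ 0 := by intro h; linarith
  have h3 : (1 - y : ℝ) ≠ 0 := by intro h; linarith
  simp only [ratR, Nat.add_sub_cancel]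
  field_simp
  ring

lemma red2 (α₀ α₁ α₂ β₀ β₁ β₂ : ℕ) (hβ₂ : 1 ≤ β₂) {q : ℝ × ℝ} (hq : q ∈ triInt) :
    ratR α₀ α₁ α₂ β₀ β₁ (β₂ - 1) q = (1 - q.2) * ratR α₀ α₁ α₂ β₀ β₁ β₂ q := by
  obtain ⟨b, rfl⟩ : ∃ b, β₂ = b + 1 := ⟨β₂ - 1, by omega⟩
  obtain ⟨x, y⟩ := q
  obtain ⟨hx, hy, hxy⟩ := hq
  simp only at hx hy hxy
  have h1 : x + y ≠ 0 := by intro h; linarith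
  have h2 : (1 - x : ℝ) ≠ 0 := by intro h; linarith
  have h3 : (1 - y : ℝ) ≠ 0 := by intro h; linarith
  simp only [ratR, Nat.add_sub_cancel]
  field_simp
  ring

end Aux

open Set Real in
/-- For `β ≥ (1,1,1)` with `‖α+β‖_∞ ≤ |α|+1`, the four functions `R^α_β`,
`R^α_{β-e_j}` are integrable on `T` and
`∫_T R^α_β = ½ (∫_T R^α_{β-e₀} + ∫_T R^α_{β-e₁} + ∫_T R^α_{β-e₂})`. -/
theorem integral_rec_four_term (α₀ α₁ α₂ β₀ β₁ β₂ : ℕ)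
    (hβ₀ : 1 ≤ β₀) (hβ₁ : 1 ≤ β₁) (hβ₂ : 1 ≤ β₂)
    (hmax : max (α₀ + β₀) (max (α₁ + β₁) (α₂ + β₂)) ≤ α₀ + α₁ + α₂ + 1) :
    IntegrableOn (ratR α₀ α₁ α₂ β₀ β₁ β₂) stdTri ∧
    IntegrableOn (ratR α₀ α₁ α₂ (β₀ - 1) β₁ β₂) stdTri ∧
    IntegrableOn (ratR α₀ α₁ α₂ β₀ (β₁ - 1) β₂) stdTri ∧
    IntegrableOn (ratR α₀ α₁ α₂ β₀ β₁ (β₂ - 1)) stdTri ∧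
    (∫ q in stdTri, ratR α₀ α₁ α₂ β₀ β₁ β₂ q) =
      (1 / 2) * ((∫ q in stdTri, ratR α₀ α₁ α₂ (β₀ - 1) β₁ β₂ q) +
        (∫ q in stdTri, ratR α₀ α₁ α₂ β₀ (β₁ - 1) β₂ q) +
        (∫ q in stdTri, ratR α₀ α₁ α₂ β₀ β₁ (β₂ - 1) q)) := by
  -- integrability of the main function, by domination
  have hmain : IntegrableOn (ratR α₀ α₁ α₂ β₀ β₁ β₂) stdTri := by
    apply Integrable.mono' integrableOn_domH
      (measurable_ratR α₀ α₁ α₂ β₀ β₁ β₂).aestronglyMeasurable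
    filter_upwards [ae_triInt] with q hq
    rw [Real.norm_eq_abs]
    exact ratR_le_domH α₀ α₁ α₂ β₀ β₁ β₂ hβ₀ hβ₁ hβ₂ hmax hq
  -- the three reduced functions are dominated by the main one
  have hbd : ∀ (c : ℝ × ℝ → ℝ), (∀ q ∈ triInt, 0 ≤ c q ∧ c q ≤ 1) →
      (∀ᵐ q ∂(volume.restrict stdTri),
        ‖c q * ratR α₀ α₁ α₂ β₀ β₁ β₂ q‖ ≤ ‖ratR α₀ α₁ α₂ β₀ β₁ β₂ q‖) := by
    intro c hc
    filter_upwards [ae_triInt] with q hq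
    rw [Real.norm_eq_abs, Real.norm_eq_abs, abs_mul,
      abs_of_nonneg (hc q hq).1]
    calc c q * |ratR α₀ α₁ α₂ β₀ β₁ β₂ q| ≤ 1 * |ratR α₀ α₁ α₂ β₀ β₁ β₂ q| :=
          mul_le_mul_of_nonneg_right (hc q hq).2 (abs_nonneg _)
      _ = |ratR α₀ α₁ α₂ β₀ β₁ β₂ q| := one_mul _
  have h0 : IntegrableOn (ratR α₀ α₁ α₂ (β₀ - 1) β₁ β₂) stdTri := by
    apply Integrable.mono hmain
      (measurable_ratR α₀ α₁ α₂ (β₀ - 1) β₁ β₂).aestronglyMeasurable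
    have := hbd (fun q => q.1 + q.2) (fun q hq => by
      obtain ⟨h1, h2, h3⟩ := hq
      refine ⟨show (0:ℝ) ≤ q.1 + q.2 by positivity, show q.1 + q.2 ≤ (1:ℝ) by linarith⟩)
    filter_upwards [this, ae_triInt] with q h1 h2
    rwa [red0 α₀ α₁ α₂ β₀ β₁ β₂ hβ₀ h2]
  have h1 : IntegrableOn (ratR α₀ α₁ α₂ β₀ (β₁ - 1) β₂) stdTri := by
    apply Integrable.mono hmain
      (measurable_ratR α₀ α₁ α₂ β₀ (β₁ - 1) β₂).aestronglyMeasurable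
    have := hbd (fun q => 1 - q.1) (fun q hq => by
      obtain ⟨h1, h2, h3⟩ := hq
      refine ⟨show (0:ℝ) ≤ 1 - q.1 by linarith, show 1 - q.1 ≤ (1:ℝ) by linarith⟩)
    filter_upwards [this, ae_triInt] with q h1 h2
    rwa [red1 α₀ α₁ α₂ β₀ β₁ β₂ hβ₁ h2]
  have h2 : IntegrableOn (ratR α₀ α₁ α₂ β₀ β₁ (β₂ - 1)) stdTri := by
    apply Integrable.mono hmain
      (measurable_ratR α₀ α₁ α₂ β₀ β₁ (β₂ - 1)).aestronglyMeasurable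
    have := hbd (fun q => 1 - q.2) (fun q hq => by
      obtain ⟨h1, h2, h3⟩ := hq
      refine ⟨show (0:ℝ) ≤ 1 - q.2 by linarith, show 1 - q.2 ≤ (1:ℝ) by linarith⟩)
    filter_upwards [this, ae_triInt] with q h1 h2
    rwa [red2 α₀ α₁ α₂ β₀ β₁ β₂ hβ₂ h2]
  refine ⟨hmain, h0, h1, h2, ?_⟩
  have hsum : ∀ᵐ q ∂(volume.restrict stdTri),
      ratR α₀ α₁ α₂ (β₀ - 1) β₁ β₂ q + ratR α₀ α₁ α₂ β₀ (β₁ - 1) β₂ q +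
        ratR α₀ α₁ α₂ β₀ β₁ (β₂ - 1) q = 2 * ratR α₀ α₁ α₂ β₀ β₁ β₂ q := by
    filter_upwards [ae_triInt] with q hq
    rw [red0 α₀ α₁ α₂ β₀ β₁ β₂ hβ₀ hq, red1 α₀ α₁ α₂ β₀ β₁ β₂ hβ₁ hq,
      red2 α₀ α₁ α₂ β₀ β₁ β₂ hβ₂ hq]
    ring
  have heq : (∫ q in stdTri, (ratR α₀ α₁ α₂ (β₀ - 1) β₁ β₂ q +
      ratR α₀ α₁ α₂ β₀ (β₁ - 1) β₂ q + ratR α₀ α₁ α₂ β₀ β₁ (β₂ - 1) q)) =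
      ∫ q in stdTri, 2 * ratR α₀ α₁ α₂ β₀ β₁ β₂ q := integral_congr_ae hsum
  have hadd : Integrable (fun q => ratR α₀ α₁ α₂ (β₀ - 1) β₁ β₂ q +
      ratR α₀ α₁ α₂ β₀ (β₁ - 1) β₂ q) (volume.restrict stdTri) := h0.add h1
  rw [integral_add hadd h2, integral_add h0 h1, integral_const_mul] at heq
  linarith
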